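/- Let r be a positive integer and let G be a hypergraph all of whose edges are nonempty sets of size at most r. Then for every subset A ⊆ V(G) with e(A) ≥ 2^{2r}, one has (1/6)·r·e(A)^{1/r} ≤ m(A) ≤ r·e(A). -/

import Mathlib

open scoped Classical

lemma pow_le_three_pow_mul_factorial (r : ℕ) :
    (r : ℝ) ^ r ≤ 3 ^ r * (Nat.factorial r : ℝ) := by
  induction r with
  | zero => simp
  | succ n ih =>
    have key : ((n + 1 : ℕ) : ℝ) ^ n ≤ 3 * (n : ℝ) ^ n := by
      rcases Nat.eq_zero_or_pos n with h | h
      · subst h; norm_num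
      · have hn : (0:ℝ) < n := by exact_mod_cast h
        have h1 : ((n+1 : ℕ) : ℝ) = (n:ℝ) * (1 + 1/(n:ℝ)) := by
          push_cast; field_simp
        have h2 : (1 + 1/(n:ℝ)) ^ n ≤ Real.exp (1/(n:ℝ)) ^ n := by
          apply pow_le_pow_left₀ (by positivity)
          have := Real.add_one_le_exp (1/(n:ℝ))
          linarith
        have h3 : Real.exp (1/(n:ℝ)) ^ n = Real.exp 1 := by
          rw [← Real.exp_nat_mul]
          congr 1
          field_simp
        have h4 : Real.exp 1 ≤ 3 := by
          have := Real.exp_one_lt_d9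
          linarith
        calc ((n+1 : ℕ) : ℝ) ^ n = (n:ℝ)^n * (1 + 1/(n:ℝ))^n := by
              rw [h1, mul_pow]
          _ ≤ (n:ℝ)^n * 3 := by
              have := h2.trans (le_of_eq h3) |>.trans h4
              exact mul_le_mul_of_nonneg_left this (by positivity)
          _ = 3 * (n:ℝ)^n := by ring
    have hn1 : (0:ℝ) ≤ ((n+1 : ℕ) : ℝ) := by positivity
    calc ((n+1 : ℕ) : ℝ) ^ (n+1) = ((n+1:ℕ):ℝ) * ((n+1:ℕ):ℝ) ^ n := by ring
      _ ≤ ((n+1:ℕ):ℝ) * (3 * (n:ℝ)^n) := by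
          exact mul_le_mul_of_nonneg_left key hn1
      _ ≤ ((n+1:ℕ):ℝ) * (3 * (3^n * (Nat.factorial n : ℝ))) := by
          apply mul_le_mul_of_nonneg_left _ hn1
          apply mul_le_mul_of_nonneg_left ih (by norm_num)
      _ = 3 ^ (n+1) * (((n+1) * Nat.factorial n : ℕ) : ℝ) := by
          push_cast; ring
      _ = 3 ^ (n+1) * (Nat.factorial (n+1) : ℝ) := by rw [Nat.factorial_succ]

lemma choose_mono_half {n a b : ℕ} (hab : a ≤ b) (hb : b ≤ n / 2) :
    Nat.choose n a ≤ Nat.choose n b := by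
  induction b, hab using Nat.le_induction with
  | base => exact le_refl _
  | succ b hab ih =>
    exact le_trans (ih (le_trans (Nat.le_succ b) hb))
      (Nat.choose_le_succ_of_lt_half_left (lt_of_lt_of_le (Nat.lt_succ_self b) hb))


/-- The number of edges of the hypergraph with edge collection `E` that are contained in `A`. -/
noncomputable def hyperEdgesIn {V : Type*} [DecidableEq V] (E : Finset (Finset V))
    (A : Finset V) : ℕ :=
  (E.filter (fun e => e ⊆ A)).card

/-- The number of vertices of `A` that are non-isolated in `A`, i.e. contained in some edge
`e ⊆ A` of the hypergraph. -/
noncomputable def hyperM {V : Type*} [DecidableEq V] (E : Finset (Finset V))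
    (A : Finset V) : ℕ :=
  (A.filter (fun v => ∃ e ∈ E, e ⊆ A ∧ v ∈ e)).card

/-- Theorem: let `r` be a positive integer and `G` a hypergraph all of whose edges are
nonempty sets of size at most `r`. Then for every subset `A ⊆ V(G)` with `e(A) ≥ 2^{2r}`,
one has `(1/6)·r·e(A)^{1/r} ≤ m(A) ≤ r·e(A)`. -/
theorem stmt_11 {V : Type*} [DecidableEq V] (r : ℕ) (hr : 1 ≤ r)
    (E : Finset (Finset V)) (hE : ∀ e ∈ E, e.Nonempty ∧ e.card ≤ r)
    (A : Finset V) (hA : 2 ^ (2 * r) ≤ hyperEdgesIn E A) :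
    (1 / 6 : ℝ) * (r : ℝ) * (hyperEdgesIn E A : ℝ) ^ ((1 : ℝ) / (r : ℝ)) ≤
        (hyperM E A : ℝ) ∧
      hyperM E A ≤ r * hyperEdgesIn E A := by
  set F : Finset (Finset V) := E.filter (fun e => e ⊆ A) with hF
  set S : Finset V := A.filter (fun v => ∃ e ∈ E, e ⊆ A ∧ v ∈ e) with hS
  have hN : hyperEdgesIn E A = F.card := rfl
  have hM : hyperM E A = S.card := rfl
  set N := F.card
  set m := S.card
  -- every edge in F is a subset of S
  have hFS : ∀ e ∈ F, e ⊆ S := by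
    intro e he v hv
    simp only [hF, Finset.mem_filter] at he
    simp only [hS, Finset.mem_filter]
    exact ⟨he.2 hv, e, he.1, he.2, hv⟩
  -- upper bound
  have hup : m ≤ r * N := by
    have hsub : S ⊆ F.biUnion id := by
      intro v hv
      simp only [hS, Finset.mem_filter] at hv
      obtain ⟨hvA, e, heE, heA, hve⟩ := hv
      simp only [Finset.mem_biUnion, id]
      exact ⟨e, by simp [hF, Finset.mem_filter, heE, heA], hve⟩
    calc m ≤ (F.biUnion id).card := Finset.card_le_card hsub
      _ ≤ ∑ e ∈ F, (id e).card := Finset.card_biUnion_le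
      _ ≤ ∑ e ∈ F, r := by
          apply Finset.sum_le_sum
          intro e he
          exact (hE e (Finset.mem_filter.mp he).1).2
      _ = N * r := by rw [Finset.sum_const, smul_eq_mul]
      _ = r * N := Nat.mul_comm _ _
  -- m ≥ 2r
  have hNle : N ≤ 2 ^ m := by
    have : F ⊆ S.powerset := fun e he => Finset.mem_powerset.mpr (hFS e he)
    calc N ≤ S.powerset.card := Finset.card_le_card this
      _ = 2 ^ m := Finset.card_powerset S
  have h2r : 2 * r ≤ m := by
    have : (2:ℕ) ^ (2*r) ≤ 2 ^ m := le_trans (hN ▸ hA) hNle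
    exact (Nat.pow_le_pow_iff_right (by norm_num)).mp this
  -- N ≤ r * choose m r
  have hNchoose : N ≤ r * Nat.choose m r := by
    have hsub : F ⊆ (Finset.Icc 1 r).biUnion (fun i => S.powersetCard i) := by
      intro e he
      have h1 := hE e (Finset.mem_filter.mp he).1
      simp only [Finset.mem_biUnion, Finset.mem_Icc, Finset.mem_powersetCard]
      exact ⟨e.card, ⟨Finset.card_pos.mpr h1.1, h1.2⟩, hFS e he, rfl⟩
    calc N ≤ ((Finset.Icc 1 r).biUnion (fun i => S.powersetCard i)).card :=
          Finset.card_le_card hsub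
      _ ≤ ∑ i ∈ Finset.Icc 1 r, (S.powersetCard i).card := Finset.card_biUnion_le
      _ = ∑ i ∈ Finset.Icc 1 r, Nat.choose m i := by
          simp [Finset.card_powersetCard]; rfl
      _ ≤ ∑ i ∈ Finset.Icc 1 r, Nat.choose m r := by
          apply Finset.sum_le_sum
          intro i hi
          have hi' := (Finset.mem_Icc.mp hi).2
          exact choose_mono_half hi' (Nat.le_div_iff_mul_le (by norm_num) |>.mpr
            (by omega))
      _ = r * Nat.choose m r := by
          rw [Finset.sum_const, smul_eq_mul, Nat.card_Icc]; norm_num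
  -- real lower bound
  have hrR : (0:ℝ) < r := by exact_mod_cast hr
  have hkey : (N : ℝ) ≤ (6 * (m:ℝ) / r) ^ r := by
    have hdesc : (Nat.factorial r : ℝ) * (Nat.choose m r : ℝ) ≤ (m:ℝ) ^ r := by
      have := Nat.descFactorial_le_pow m r
      rw [Nat.descFactorial_eq_factorial_mul_choose] at this
      exact_mod_cast this
    have hfac := pow_le_three_pow_mul_factorial r
    have hfacpos : (0:ℝ) < (Nat.factorial r : ℝ) := by
      exact_mod_cast Nat.factorial_pos r
    have hNR : (N:ℝ) ≤ r * (Nat.choose m r : ℝ) := by exact_mod_cast hNchoose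
    have hr2 : (r:ℝ) ≤ 2 ^ r := by exact_mod_cast (Nat.lt_two_pow_self (n := r)).le
    -- N * r^r ≤ N * 3^r * r! ≤ r * choose * 3^r * r! ≤ r * 3^r * m^r ≤ 6^r m^r
    have step1 : (N:ℝ) * (r:ℝ)^r ≤ (r:ℝ) * 3^r * (m:ℝ)^r := by
      calc (N:ℝ) * (r:ℝ)^r ≤ (N:ℝ) * (3^r * (Nat.factorial r : ℝ)) := by
            apply mul_le_mul_of_nonneg_left hfac (by positivity)
        _ ≤ ((r:ℝ) * (Nat.choose m r : ℝ)) * (3^r * (Nat.factorial r : ℝ)) := by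
            apply mul_le_mul_of_nonneg_right hNR (by positivity)
        _ = (r:ℝ) * 3^r * ((Nat.factorial r : ℝ) * (Nat.choose m r : ℝ)) := by ring
        _ ≤ (r:ℝ) * 3^r * (m:ℝ)^r := by
            apply mul_le_mul_of_nonneg_left hdesc (by positivity)
    have step2 : (r:ℝ) * 3^r * (m:ℝ)^r ≤ 6^r * (m:ℝ)^r := by
      have : (r:ℝ) * 3^r ≤ 2^r * 3^r :=
        mul_le_mul_of_nonneg_right hr2 (by positivity)
      calc (r:ℝ) * 3^r * (m:ℝ)^r ≤ 2^r * 3^r * (m:ℝ)^r :=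
            mul_le_mul_of_nonneg_right this (by positivity)
        _ = 6^r * (m:ℝ)^r := by rw [← mul_pow]; norm_num
    have hrpow : (0:ℝ) < (r:ℝ)^r := by positivity
    have : (N:ℝ) * (r:ℝ)^r ≤ 6^r * (m:ℝ)^r := step1.trans step2
    rw [div_pow, mul_pow, le_div_iff₀ hrpow]
    linarith
  have hlow : (1 / 6 : ℝ) * (r : ℝ) * (N : ℝ) ^ ((1 : ℝ) / (r : ℝ)) ≤ (m : ℝ) := by
    have hNpos : (0:ℝ) ≤ (N:ℝ) := Nat.cast_nonneg N
    have hbase : (0:ℝ) ≤ 6 * (m:ℝ) / r := by positivity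
    have h1 : (N:ℝ) ^ ((1:ℝ)/(r:ℝ)) ≤ ((6 * (m:ℝ) / r) ^ r) ^ ((1:ℝ)/(r:ℝ)) :=
      Real.rpow_le_rpow hNpos hkey (by positivity)
    have h2 : ((6 * (m:ℝ) / r) ^ r : ℝ) ^ ((1:ℝ)/(r:ℝ)) = 6 * (m:ℝ) / r := by
      rw [← Real.rpow_natCast (6 * (m:ℝ) / r) r, ← Real.rpow_mul hbase,
        mul_one_div, div_self (ne_of_gt hrR), Real.rpow_one]
    have h3 : (N:ℝ) ^ ((1:ℝ)/(r:ℝ)) ≤ 6 * (m:ℝ) / r := h2 ▸ h1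
    have h4 : (1/6:ℝ) * (r:ℝ) * ((N:ℝ) ^ ((1:ℝ)/(r:ℝ))) ≤ (1/6:ℝ) * (r:ℝ) * (6 * (m:ℝ) / r) := by
      apply mul_le_mul_of_nonneg_left h3 (by positivity)
    have h5 : (1/6:ℝ) * (r:ℝ) * (6 * (m:ℝ) / r) = (m:ℝ) := by
      field_simp
    linarith
  rw [hN, hM]
  exact ⟨hlow, hup⟩
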